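/- arXiv:2508.10448 — 3 statements merged into one kernel-verified Lean document; each statement's English description precedes it below -/
import Mathlib

section
/- Let u be a C² nonnegative function on the closed disk of radius R in ℝ² satisfying Δu ≤ c·u (with Δ the nonnegative Laplacian, i.e. -div(∇u) ≤ c u) for a constant c > 0. Then the function r ↦ e^{(c/4)r²} · (1/r²) ∫_{D_r} u is non-decreasing on (0,R). -/
open MeasureTheory

section Helpers
open Set Metric intervalIntegral Filter Real Topology

noncomputable section

/-- direction vector of angle θ -/
def cdir (θ : ℝ) : ℂ := Complex.exp (θ * Complex.I)

/-- polar point -/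
def cP (s θ : ℝ) : ℂ := s • cdir θ

lemma norm_cdir (θ : ℝ) : ‖cdir θ‖ = 1 := Complex.norm_exp_ofReal_mul_I θ

lemma norm_cP (s θ : ℝ) : ‖cP s θ‖ = |s| := by
  rw [cP, norm_smul, norm_cdir, Real.norm_eq_abs, mul_one]

lemma cP_eq_polar (s θ : ℝ) : cP s θ = Complex.polarCoord.symm (s, θ) := by
  simp [cP, cdir, Complex.exp_mul_I, Complex.real_smul]
  ring

lemma hasDerivAt_cdir (θ : ℝ) : HasDerivAt cdir (Complex.I * cdir θ) θ := by
  have h : HasDerivAt (fun w : ℂ => Complex.exp (w * Complex.I))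
      (Complex.exp ((θ:ℂ) * Complex.I) * Complex.I) (θ:ℂ) := by
    simpa using ((hasDerivAt_id ((θ:ℂ))).mul_const Complex.I).cexp
  have := h.comp_ofReal
  show HasDerivAt (fun θ:ℝ => Complex.exp (θ * Complex.I)) _ _
  simpa [cdir, mul_comm] using this

lemma hasDerivAt_cP_s (s θ : ℝ) : HasDerivAt (fun s => cP s θ) (cdir θ) s := by
  simpa [cP] using (hasDerivAt_id s).smul_const (cdir θ)

lemma hasDerivAt_cP_θ (s θ : ℝ) :
    HasDerivAt (fun θ => cP s θ) (Complex.I * cP s θ) θ := by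
  have := (hasDerivAt_cdir θ).const_smul s
  simp only [cP]
  refine this.congr_deriv ?_
  simp [Complex.real_smul]
  ring

lemma cdir_decomp (θ : ℝ) :
    cdir θ = Real.cos θ • (1:ℂ) + Real.sin θ • Complex.I := by
  simp [cdir, Complex.exp_mul_I, Complex.real_smul]

lemma I_cdir_decomp (θ : ℝ) :
    Complex.I * cdir θ = (-Real.sin θ) • (1:ℂ) + Real.cos θ • Complex.I := by
  simp only [cdir, Complex.exp_mul_I, Complex.real_smul]
  push_cast
  ring_nf
  rw [Complex.I_sq]
  ring

lemma cdir_pi_eq : cdir Real.pi = cdir (-Real.pi) := by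
  have h : ((-Real.pi:ℝ):ℂ) = -(Real.pi:ℂ) := by push_cast; ring
  simp [cdir, h, neg_mul, Complex.exp_neg, Complex.exp_pi_mul_I, inv_neg, inv_one]

lemma cP_pi_eq (s : ℝ) : cP s Real.pi = cP s (-Real.pi) := by
  simp [cP, cdir_pi_eq]

end

lemma continuous_cdir : Continuous cdir := by
  unfold cdir
  exact Complex.continuous_exp.comp (Complex.continuous_ofReal.mul continuous_const)

lemma param_deriv {F F' : ℝ → ℝ → ℝ} {s₀ a b ε C : ℝ} (hε : 0 < ε)
    (hdiff : ∀ θ ∈ Set.uIcc a b, ∀ s ∈ Metric.ball s₀ ε,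
      HasDerivAt (fun s => F s θ) (F' s θ) s)
    (hFc : ∀ s ∈ Metric.ball s₀ ε, ContinuousOn (fun θ => F s θ) (Set.uIcc a b))
    (hF'c : ContinuousOn (fun θ => F' s₀ θ) (Set.uIcc a b))
    (hbd : ∀ θ ∈ Set.uIcc a b, ∀ s ∈ Metric.ball s₀ ε, |F' s θ| ≤ C) :
    HasDerivAt (fun s => ∫ θ in a..b, F s θ) (∫ θ in a..b, F' s₀ θ) s₀ := by
  have hsub : Set.uIoc a b ⊆ Set.uIcc a b := Set.uIoc_subset_uIcc
  have hmeas : ∀ s ∈ Metric.ball s₀ ε,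
      AEStronglyMeasurable (F s) (volume.restrict (Set.uIoc a b)) := by
    intro s hs
    exact ((hFc s hs).mono hsub).aestronglyMeasurable measurableSet_uIoc
  have h := intervalIntegral.hasDerivAt_integral_of_dominated_loc_of_deriv_le
    (F := F) (F' := F') (x₀ := s₀) (a := a) (b := b) (bound := fun _ => C) (Metric.ball_mem_nhds _ hε)
    (Filter.eventually_iff_exists_mem.2 ⟨Metric.ball s₀ ε, Metric.ball_mem_nhds _ hε, hmeas⟩)
    ((hFc s₀ (Metric.mem_ball_self hε)).intervalIntegrable)
    ((hF'c.mono hsub).aestronglyMeasurable measurableSet_uIoc)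
    (Filter.Eventually.of_forall fun θ hθ s hs => by
      simpa using hbd θ (hsub hθ) s hs)
    intervalIntegrable_const
    (Filter.Eventually.of_forall fun θ hθ s hs => hdiff θ (hsub hθ) s hs)
  exact h.2

lemma continuous_polar_symm : Continuous (fun p : ℝ × ℝ => Complex.polarCoord.symm p) := by
  have : (fun p : ℝ × ℝ => Complex.polarCoord.symm p)
      = fun p : ℝ × ℝ => (p.1 : ℂ) * (Real.cos p.2 + Real.sin p.2 * Complex.I) := by
    funext p; rw [Complex.polarCoord_symm_apply]
  rw [this]; fun_prop

lemma polar_area (w : ℂ → ℝ) (hw : Continuous w) {r : ℝ} (hr : 0 < r) :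
    ∫ z in Metric.ball (0:ℂ) r, w z
      = ∫ s in (0:ℝ)..r, s * ∫ θ in (-π)..π, w (cP s θ) := by
  have h1 : ∫ z in Metric.ball (0:ℂ) r, w z
      = ∫ z, (Metric.ball (0:ℂ) r).indicator w z := by
    rw [MeasureTheory.integral_indicator measurableSet_ball]
  have h2 := Complex.integral_comp_polarCoord_symm ((Metric.ball (0:ℂ) r).indicator w)
  set T : Set (ℝ × ℝ) := Set.Ioi (0:ℝ) ×ˢ Set.Ioo (-π) π with hT
  have hTeq : polarCoord.target = T := polarCoord_target
  set S : Set (ℝ × ℝ) := Set.Ioo (0:ℝ) r ×ˢ Set.Ioo (-π) π with hS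
  have hST : S ⊆ T := Set.prod_mono Set.Ioo_subset_Ioi_self le_rfl
  set h : ℝ × ℝ → ℝ := fun p => p.1 * w (Complex.polarCoord.symm p) with hh
  have key : ∀ p ∈ T, p.1 • (Metric.ball (0:ℂ) r).indicator w (Complex.polarCoord.symm p)
      = S.indicator h p := by
    rintro ⟨s, θ⟩ ⟨hs, hθ⟩
    simp only [Set.mem_Ioi] at hs
    by_cases hsr : s < r
    · have hmem : Complex.polarCoord.symm (s, θ) ∈ Metric.ball (0:ℂ) r := by
        rw [← cP_eq_polar, Metric.mem_ball, dist_zero_right, norm_cP, abs_of_pos hs]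
        exact hsr
      have hmemS : (s, θ) ∈ S := ⟨⟨hs, hsr⟩, hθ⟩
      rw [Set.indicator_of_mem hmem, Set.indicator_of_mem hmemS]
      simp [h]
    · have hmem : Complex.polarCoord.symm (s, θ) ∉ Metric.ball (0:ℂ) r := by
        rw [← cP_eq_polar, Metric.mem_ball, dist_zero_right, norm_cP, abs_of_pos hs]
        exact fun hlt => hsr hlt
      have hmemS : (s, θ) ∉ S := fun hm => hsr hm.1.2
      rw [Set.indicator_of_notMem hmem, Set.indicator_of_notMem hmemS, smul_zero]
  have hmeasT : MeasurableSet T := measurableSet_Ioi.prod measurableSet_Ioo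
  have hmeasS : MeasurableSet S := measurableSet_Ioo.prod measurableSet_Ioo
  have hcont_h : Continuous h := by
    apply continuous_fst.mul (hw.comp continuous_polar_symm)
  have hint : IntegrableOn h S (volume.prod volume) := by
    have hc : IsCompact (Set.Icc (0:ℝ) r ×ˢ Set.Icc (-π) π) :=
      isCompact_Icc.prod isCompact_Icc
    have : IntegrableOn h (Set.Icc (0:ℝ) r ×ˢ Set.Icc (-π) π) (volume.prod volume) :=
      hcont_h.continuousOn.integrableOn_compact hc
    exact this.mono_set (Set.prod_mono Set.Ioo_subset_Icc_self Set.Ioo_subset_Icc_self)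
  calc ∫ z in Metric.ball (0:ℂ) r, w z
      = ∫ p in polarCoord.target, p.1 • (Metric.ball (0:ℂ) r).indicator w
          (Complex.polarCoord.symm p) := by rw [h1, h2]
    _ = ∫ p in T, S.indicator h p := by
        rw [hTeq]
        exact setIntegral_congr_fun hmeasT key
    _ = ∫ p in S, h p := by
        rw [setIntegral_indicator hmeasS]
        congr 1
        rw [Set.inter_eq_right.2 hST]
    _ = ∫ s in Set.Ioo (0:ℝ) r, ∫ θ in Set.Ioo (-π) π, s * w (Complex.polarCoord.symm (s, θ)) := by
        rw [Measure.volume_eq_prod]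
        exact setIntegral_prod h hint
    _ = ∫ s in (0:ℝ)..r, s * ∫ θ in (-π)..π, w (cP s θ) := by
        rw [intervalIntegral.integral_of_le hr.le, ← integral_Ioc_eq_integral_Ioo]
        apply setIntegral_congr_fun measurableSet_Ioc
        intro s _
        dsimp only
        rw [intervalIntegral.integral_of_le (by linarith [Real.pi_pos] : -π ≤ π),
          integral_Ioc_eq_integral_Ioo, ← MeasureTheory.integral_const_mul]
        apply setIntegral_congr_fun measurableSet_Ioo
        intro θ _
        dsimp only
        rw [cP_eq_polar]

lemma polar_lap_identity (H : ℂ →L[ℝ] ℂ →L[ℝ] ℝ) (D : ℂ →L[ℝ] ℝ) (s a b : ℝ) (hs : s ≠ 0)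
    (hab : a^2 + b^2 = 1) (e f : ℂ) (he : e = a • (1:ℂ) + b • Complex.I)
    (hf : f = (-b) • (1:ℂ) + a • Complex.I) :
    H e (s • e) + D e
      = s * (H 1 1 + H Complex.I Complex.I) - (1/s) * (H (s • f) (s • f) - D (s • e)) := by
  subst he hf
  simp only [map_add, _root_.map_smul, ContinuousLinearMap.add_apply, ContinuousLinearMap.smul_apply,
    smul_eq_mul, _root_.map_neg, ContinuousLinearMap.neg_apply, neg_smul]
  field_simp
  linear_combination (s * (H 1 1 + H Complex.I Complex.I)) * hab

set_option maxHeartbeats 1000000 in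
noncomputable section
open Complex in
theorem key (R c : ℝ) (hR : 0 < R) (hc : 0 < c) (v : ℂ → ℝ)
    (hv : ContDiffOn ℝ 2 v (Metric.closedBall 0 R))
    (hpos : ∀ z ∈ Metric.closedBall (0:ℂ) R, 0 ≤ v z)
    (hineq : ∀ z ∈ Metric.closedBall (0:ℂ) R,
      -(fderiv ℝ (fun w => fderiv ℝ v w 1) z 1
        + fderiv ℝ (fun w => fderiv ℝ v w Complex.I) z Complex.I) ≤ c * v z) :
    MonotoneOn (fun r : ℝ => Real.exp (c / 4 * r ^ 2) *
      ((1 / r ^ 2) * ∫ z in Metric.ball (0:ℂ) r, v z)) (Set.Ioo 0 R) := by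
  have hπ : (0:ℝ) < π := Real.pi_pos
  have hππ : -π ≤ π := by linarith
  set Dv : ℂ → ℂ →L[ℝ] ℝ := fderiv ℝ v with hDv_def
  set Hv : ℂ → ℂ →L[ℝ] ℂ →L[ℝ] ℝ := fderiv ℝ (fderiv ℝ v) with hHv_def
  have hball : Metric.ball (0:ℂ) R ⊆ Metric.closedBall 0 R := Metric.ball_subset_closedBall
  have hvo : ContDiffOn ℝ 2 v (Metric.ball 0 R) := hv.mono hball
  have hDvc : ContinuousOn Dv (Metric.ball 0 R) :=
    hvo.continuousOn_fderiv_of_isOpen Metric.isOpen_ball (by norm_num)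
  have hDvC1 : ContDiffOn ℝ 1 Dv (Metric.ball 0 R) :=
    hvo.fderiv_of_isOpen Metric.isOpen_ball (by norm_num)
  have hHvc : ContinuousOn Hv (Metric.ball 0 R) :=
    hDvC1.continuousOn_fderiv_of_isOpen Metric.isOpen_ball (by norm_num)
  have hvdiff : ∀ z ∈ Metric.ball (0:ℂ) R, HasFDerivAt v (Dv z) z := fun z hz =>
    ((hvo.contDiffAt (Metric.isOpen_ball.mem_nhds hz)).differentiableAt
      (by norm_num)).hasFDerivAt
  have hDvdiff : ∀ z ∈ Metric.ball (0:ℂ) R, HasFDerivAt Dv (Hv z) z := fun z hz =>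
    ((hDvC1.contDiffAt (Metric.isOpen_ball.mem_nhds hz)).differentiableAt
      (by norm_num)).hasFDerivAt
  have hvc : ContinuousOn v (Metric.closedBall 0 R) := hv.continuousOn
  -- Tietze extension of v
  obtain ⟨Vt, hVt0⟩ := ContinuousMap.exists_restrict_eq (Y := ℝ)
    (Metric.isClosed_closedBall (x := (0:ℂ)) (ε := R)) ⟨_, hvc.restrict⟩
  have hVt : ∀ z ∈ Metric.closedBall (0:ℂ) R, Vt z = v z := by
    intro z hz
    have := congrFun (congrArg DFunLike.coe hVt0) ⟨z, hz⟩
    simpa using this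
  -- membership facts
  have hmem : ∀ {s : ℝ}, |s| ≤ R → ∀ θ, cP s θ ∈ Metric.closedBall (0:ℂ) R := by
    intro s hs θ
    rw [Metric.mem_closedBall, dist_zero_right, norm_cP]; exact hs
  have hmemb : ∀ {s : ℝ}, |s| < R → ∀ θ, cP s θ ∈ Metric.ball (0:ℂ) R := by
    intro s hs θ
    rw [Metric.mem_ball, dist_zero_right, norm_cP]; exact hs
  -- the one-variable functions
  set A : ℝ → ℝ := fun s => ∫ θ in (-π)..π, v (cP s θ) with hA_def
  set At : ℝ → ℝ := fun s => ∫ θ in (-π)..π, Vt (cP s θ) with hAt_def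
  set B : ℝ → ℝ := fun s => ∫ θ in (-π)..π, Dv (cP s θ) (cdir θ) with hB_def
  set L : ℝ → ℝ := fun s =>
    ∫ θ in (-π)..π, (Hv (cP s θ) 1 1 + Hv (cP s θ) Complex.I Complex.I) with hL_def
  set ft : ℝ → ℝ := fun r => ∫ s in (0:ℝ)..r, s * At s with hft_def
  have hcPcont : ∀ s : ℝ, Continuous (fun θ => cP s θ) := fun s =>
    continuous_cdir.const_smul s
  have hAt_cont : Continuous At := by
    apply intervalIntegral.continuous_parametric_intervalIntegral_of_continuous'
    have : Continuous fun p : ℝ × ℝ => cP p.1 p.2 := by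
      exact (continuous_fst.smul (continuous_cdir.comp continuous_snd))
    exact Vt.continuous.comp this
  have hft_cont : Continuous ft := by
    apply intervalIntegral.continuous_primitive
    intro a b
    exact (continuous_id.mul hAt_cont).intervalIntegrable _ _
  have hft_deriv : ∀ r : ℝ, HasDerivAt ft (r * At r) r := by
    intro r
    have hcont : Continuous fun s => s * At s := continuous_id.mul hAt_cont
    exact intervalIntegral.integral_hasDerivAt_right
      (hcont.intervalIntegrable _ _)
      (hcont.stronglyMeasurable.stronglyMeasurableAtFilter)
      hcont.continuousAt
  have hAeq : ∀ s : ℝ, |s| ≤ R → At s = A s := by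
    intro s hs
    apply intervalIntegral.integral_congr
    intro θ _
    exact hVt _ (hmem hs θ)
  have hAnonneg : ∀ s : ℝ, |s| ≤ R → 0 ≤ A s := by
    intro s hs
    apply intervalIntegral.integral_nonneg hππ
    intro θ _
    exact hpos _ (hmem hs θ)
  -- main derivative facts
  have hkey : ∀ s₀ ∈ Set.Ioo (0:ℝ) R,
      HasDerivAt A (B s₀) s₀ ∧ HasDerivAt (fun s => s * B s) (s₀ * L s₀) s₀ := by
    rintro s₀ ⟨hs₀0, hs₀R⟩
    set ε : ℝ := (R - s₀)/2 with hε_def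
    set r₂ : ℝ := (R + s₀)/2 with hr₂_def
    have hε : 0 < ε := by simp only [hε_def]; linarith
    have hr₂R : r₂ < R := by simp only [hr₂_def]; linarith
    have hr₂0 : 0 < r₂ := by simp only [hr₂_def]; linarith
    have habs : ∀ s ∈ Metric.ball s₀ ε, |s| < r₂ := by
      intro s hs
      rw [Metric.mem_ball, Real.dist_eq] at hs
      calc |s| = |s₀ + (s - s₀)| := by ring_nf
        _ ≤ |s₀| + |s - s₀| := abs_add_le _ _
        _ < s₀ + ε := by rw [abs_of_pos hs₀0]; linarith
        _ = r₂ := by simp only [hε_def, hr₂_def]; ring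
    have hsubB : Metric.closedBall (0:ℂ) r₂ ⊆ Metric.ball 0 R :=
      Metric.closedBall_subset_ball hr₂R
    have hmemP : ∀ s ∈ Metric.ball s₀ ε, ∀ θ : ℝ, cP s θ ∈ Metric.closedBall (0:ℂ) r₂ := by
      intro s hs θ
      rw [Metric.mem_closedBall, dist_zero_right, norm_cP]
      exact (habs s hs).le
    have hmemPB : ∀ s ∈ Metric.ball s₀ ε, ∀ θ : ℝ, cP s θ ∈ Metric.ball (0:ℂ) R :=
      fun s hs θ => hsubB (hmemP s hs θ)
    have hs₀b : s₀ ∈ Metric.ball s₀ ε := Metric.mem_ball_self hε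
    obtain ⟨M₁, hM₁⟩ := (isCompact_closedBall (0:ℂ) r₂).exists_bound_of_continuousOn
      (hDvc.mono hsubB)
    obtain ⟨M₂, hM₂⟩ := (isCompact_closedBall (0:ℂ) r₂).exists_bound_of_continuousOn
      (f := Hv) (hHvc.mono hsubB)
    have hDvPc : ∀ s ∈ Metric.ball s₀ ε, Continuous fun θ => Dv (cP s θ) := fun s hs =>
      hDvc.comp_continuous (hcPcont s) (fun θ => hmemPB s hs θ)
    have hHvPc : ∀ s ∈ Metric.ball s₀ ε, Continuous fun θ => Hv (cP s θ) := fun s hs =>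
      hHvc.comp_continuous (hcPcont s) (fun θ => hmemPB s hs θ)
    constructor
    · -- A' = B
      apply param_deriv (F := fun s θ => v (cP s θ))
        (F' := fun s θ => Dv (cP s θ) (cdir θ)) hε
      · intro θ _ s hs
        exact (hvdiff _ (hmemPB s hs θ)).comp_hasDerivAt s (hasDerivAt_cP_s s θ)
      · intro s hs
        exact ((hvc.comp_continuous (hcPcont s)
          (fun θ => hball (hmemPB s hs θ))).continuousOn)
      · exact (((hDvPc s₀ hs₀b)).clm_apply continuous_cdir).continuousOn
      · intro θ _ s hs
        calc |Dv (cP s θ) (cdir θ)| ≤ ‖Dv (cP s θ)‖ * ‖cdir θ‖ :=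
              (Dv (cP s θ)).le_opNorm _
          _ = ‖Dv (cP s θ)‖ := by rw [norm_cdir, mul_one]
          _ ≤ M₁ := hM₁ _ (hmemP s hs θ)
    · -- (s*B)' = s₀ * L s₀
      have hM₂0 : 0 ≤ M₂ :=
        le_trans (norm_nonneg _) (hM₂ 0 (Metric.mem_closedBall_self hr₂0.le))
      have hGbar : HasDerivAt (fun s => ∫ θ in (-π)..π, Dv (cP s θ) (cP s θ))
          (∫ θ in (-π)..π,
            (Hv (cP s₀ θ) (cdir θ) (cP s₀ θ) + Dv (cP s₀ θ) (cdir θ))) s₀ := by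
        apply param_deriv (F := fun s θ => Dv (cP s θ) (cP s θ))
          (F' := fun s θ => Hv (cP s θ) (cdir θ) (cP s θ) + Dv (cP s θ) (cdir θ)) hε
        · intro θ _ s hs
          have hc : HasDerivAt (fun s => Dv (cP s θ)) (Hv (cP s θ) (cdir θ)) s :=
            (hDvdiff _ (hmemPB s hs θ)).comp_hasDerivAt s (hasDerivAt_cP_s s θ)
          exact hc.clm_apply (hasDerivAt_cP_s s θ)
        · intro s hs
          exact ((hDvPc s hs).clm_apply (hcPcont s)).continuousOn
        · exact ((((hHvPc s₀ hs₀b).clm_apply continuous_cdir).clm_apply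
            (hcPcont s₀)).add ((hDvPc s₀ hs₀b).clm_apply continuous_cdir)).continuousOn
        · intro θ _ s hs
          have h1 : |Hv (cP s θ) (cdir θ) (cP s θ)| ≤ M₂ * r₂ := by
            calc |Hv (cP s θ) (cdir θ) (cP s θ)|
                ≤ ‖Hv (cP s θ) (cdir θ)‖ * ‖cP s θ‖ := (Hv (cP s θ) (cdir θ)).le_opNorm _
              _ ≤ (‖Hv (cP s θ)‖ * ‖cdir θ‖) * ‖cP s θ‖ := by
                  apply mul_le_mul_of_nonneg_right ((Hv (cP s θ)).le_opNorm _) (norm_nonneg _)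
              _ = ‖Hv (cP s θ)‖ * |s| := by rw [norm_cdir, mul_one, norm_cP]
              _ ≤ M₂ * r₂ := mul_le_mul (hM₂ _ (hmemP s hs θ)) (habs s hs).le
                  (abs_nonneg _) hM₂0
          have h2 : |Dv (cP s θ) (cdir θ)| ≤ M₁ := by
            calc |Dv (cP s θ) (cdir θ)| ≤ ‖Dv (cP s θ)‖ * ‖cdir θ‖ :=
                (Dv (cP s θ)).le_opNorm _
              _ = ‖Dv (cP s θ)‖ := by rw [norm_cdir, mul_one]
              _ ≤ M₁ := hM₁ _ (hmemP s hs θ)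
          calc |Hv (cP s θ) (cdir θ) (cP s θ) + Dv (cP s θ) (cdir θ)|
              ≤ |Hv (cP s θ) (cdir θ) (cP s θ)| + |Dv (cP s θ) (cdir θ)| := abs_add_le _ _
            _ ≤ M₂ * r₂ + M₁ := add_le_add h1 h2
      -- rewrite the function as s * B s
      have hfun : (fun s => ∫ θ in (-π)..π, Dv (cP s θ) (cP s θ)) = fun s => s * B s := by
        funext s
        rw [hB_def, ← intervalIntegral.integral_const_mul]
        apply intervalIntegral.integral_congr
        intro θ _
        show Dv (cP s θ) (cP s θ) = s * Dv (cP s θ) (cdir θ)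
        rw [cP, ContinuousLinearMap.map_smul, smul_eq_mul]
      rw [hfun] at hGbar
      -- compute the derivative value
      have hWder : ∀ θ : ℝ, HasDerivAt (fun θ => Dv (cP s₀ θ) (Complex.I * cP s₀ θ))
          (Hv (cP s₀ θ) (Complex.I * cP s₀ θ) (Complex.I * cP s₀ θ)
            - Dv (cP s₀ θ) (cP s₀ θ)) θ := by
        intro θ
        have hc : HasDerivAt (fun θ => Dv (cP s₀ θ)) (Hv (cP s₀ θ) (Complex.I * cP s₀ θ)) θ :=
          (hDvdiff _ (hmemPB s₀ hs₀b θ)).comp_hasDerivAt θ (hasDerivAt_cP_θ s₀ θ)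
        have hu : HasDerivAt (fun θ => Complex.I * cP s₀ θ)
            (Complex.I * (Complex.I * cP s₀ θ)) θ := (hasDerivAt_cP_θ s₀ θ).const_mul Complex.I
        have := hc.clm_apply hu
        refine this.congr_deriv ?_
        rw [← mul_assoc, Complex.I_mul_I, neg_one_mul, map_neg]
        ring
      have hWcont : Continuous fun θ =>
          Hv (cP s₀ θ) (Complex.I * cP s₀ θ) (Complex.I * cP s₀ θ)
            - Dv (cP s₀ θ) (cP s₀ θ) := by
        apply Continuous.sub
        · exact ((hHvPc s₀ hs₀b).clm_apply
            (continuous_const.mul (hcPcont s₀))).clm_apply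
            (continuous_const.mul (hcPcont s₀))
        · exact (hDvPc s₀ hs₀b).clm_apply (hcPcont s₀)
      have hWzero : (∫ θ in (-π)..π,
          (Hv (cP s₀ θ) (Complex.I * cP s₀ θ) (Complex.I * cP s₀ θ)
            - Dv (cP s₀ θ) (cP s₀ θ))) = 0 := by
        rw [intervalIntegral.integral_eq_sub_of_hasDerivAt (fun θ _ => hWder θ)
          (hWcont.intervalIntegrable _ _)]
        rw [cP_pi_eq]
        ring
      have hpt : ∀ θ : ℝ, Hv (cP s₀ θ) (cdir θ) (cP s₀ θ) + Dv (cP s₀ θ) (cdir θ)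
          = s₀ * (Hv (cP s₀ θ) 1 1 + Hv (cP s₀ θ) Complex.I Complex.I)
            - (1/s₀) * (Hv (cP s₀ θ) (Complex.I * cP s₀ θ) (Complex.I * cP s₀ θ)
              - Dv (cP s₀ θ) (cP s₀ θ)) := by
        intro θ
        have hIc : Complex.I * cP s₀ θ = s₀ • (Complex.I * cdir θ) := by
          rw [cP, mul_smul_comm]
        rw [hIc]
        nth_rewrite 1 [cP]
        nth_rewrite 3 [cP]
        exact polar_lap_identity (Hv (cP s₀ θ)) (Dv (cP s₀ θ)) s₀ (Real.cos θ) (Real.sin θ)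
          (ne_of_gt hs₀0) (by rw [← Real.sin_sq_add_cos_sq θ]; ring)
          _ _ (cdir_decomp θ) (I_cdir_decomp θ)
      have hval : (∫ θ in (-π)..π,
          (Hv (cP s₀ θ) (cdir θ) (cP s₀ θ) + Dv (cP s₀ θ) (cdir θ))) = s₀ * L s₀ := by
        have hiL : IntervalIntegrable (fun θ => s₀ * (Hv (cP s₀ θ) 1 1
            + Hv (cP s₀ θ) Complex.I Complex.I)) volume (-π) π := by
          apply Continuous.intervalIntegrable
          exact continuous_const.mul
            ((((hHvPc s₀ hs₀b).clm_apply continuous_const).clm_apply continuous_const).add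
              (((hHvPc s₀ hs₀b).clm_apply continuous_const).clm_apply continuous_const))
        have hiW : IntervalIntegrable (fun θ => (1/s₀) *
            (Hv (cP s₀ θ) (Complex.I * cP s₀ θ) (Complex.I * cP s₀ θ)
              - Dv (cP s₀ θ) (cP s₀ θ))) volume (-π) π :=
          (continuous_const.mul hWcont).intervalIntegrable _ _
        rw [intervalIntegral.integral_congr (g := fun θ =>
          s₀ * (Hv (cP s₀ θ) 1 1 + Hv (cP s₀ θ) Complex.I Complex.I)
            - (1/s₀) * (Hv (cP s₀ θ) (Complex.I * cP s₀ θ) (Complex.I * cP s₀ θ)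
              - Dv (cP s₀ θ) (cP s₀ θ))) (fun θ _ => hpt θ)]
        rw [intervalIntegral.integral_sub hiL hiW, intervalIntegral.integral_const_mul,
          intervalIntegral.integral_const_mul, hWzero, hL_def]
        ring
      rw [hval] at hGbar
      exact hGbar
  -- derivative of At on (0,R)
  have hAt_deriv : ∀ s ∈ Set.Ioo (0:ℝ) R, HasDerivAt At (B s) s := by
    intro s hs
    apply ((hkey s hs).1).congr_of_eventuallyEq
    filter_upwards [isOpen_Ioo.mem_nhds hs] with t ht
    exact hAeq t (by rw [abs_of_pos ht.1]; exact ht.2.le)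
  -- second derivative identity for the Laplacian
  have hlap : ∀ b : ℂ, ∀ z ∈ Metric.ball (0:ℂ) R,
      fderiv ℝ (fun w => Dv w b) z b = Hv z b b := by
    intro b z hz
    have h1 : HasFDerivAt (fun w => Dv w b) ((Hv z).flip b) z := by
      have := (hDvdiff z hz).clm_apply (hasFDerivAt_const b z)
      refine this.congr_fderiv ?_
      ext x
      simp
    rw [h1.fderiv, ContinuousLinearMap.flip_apply]
  -- lower bound for L
  have hL_ge : ∀ s ∈ Set.Ioo (0:ℝ) R, -(c * A s) ≤ L s := by
    rintro s ⟨hs0, hsR⟩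
    have habs : |s| < R := by rw [abs_of_pos hs0]; exact hsR
    have hHvPc : Continuous fun θ => Hv (cP s θ) :=
      hHvc.comp_continuous (hcPcont s) (fun θ => hmemb habs θ)
    have hvPc : Continuous fun θ => v (cP s θ) :=
      hvc.comp_continuous (hcPcont s) (fun θ => hmem habs.le θ)
    have hi1 : IntervalIntegrable (fun θ => -(c * v (cP s θ))) volume (-π) π :=
      ((continuous_const.mul hvPc).neg).intervalIntegrable _ _
    have hi2 : IntervalIntegrable
        (fun θ => Hv (cP s θ) 1 1 + Hv (cP s θ) Complex.I Complex.I) volume (-π) π := by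
      apply Continuous.intervalIntegrable
      exact ((hHvPc.clm_apply continuous_const).clm_apply continuous_const).add
        ((hHvPc.clm_apply continuous_const).clm_apply continuous_const)
    have heq : -(c * A s) = ∫ θ in (-π)..π, -(c * v (cP s θ)) := by
      rw [hA_def, intervalIntegral.integral_neg, intervalIntegral.integral_const_mul]
    rw [heq, hL_def]
    apply intervalIntegral.integral_mono_on hππ hi1 hi2
    intro θ _
    have hz := hineq (cP s θ) (hmem habs.le θ)
    rw [hlap 1 _ (hmemb habs θ), hlap Complex.I _ (hmemb habs θ)] at hz
    linarith
  -- η := s*B s + c*ft s is nonnegative on (0,R)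
  have hη_deriv : ∀ s ∈ Set.Ioo (0:ℝ) R,
      HasDerivAt (fun s => s * B s + c * ft s) (s * L s + c * (s * At s)) s :=
    fun s hs => ((hkey s hs).2).add ((hft_deriv s).const_mul c)
  have hη_mono : MonotoneOn (fun s => s * B s + c * ft s) (Set.Ioo 0 R) := by
    apply monotoneOn_of_deriv_nonneg (convex_Ioo 0 R)
    · exact fun x hx => ((hη_deriv x hx).differentiableAt.continuousAt).continuousWithinAt
    · intro x hx
      rw [interior_Ioo] at hx
      exact (hη_deriv x hx).differentiableAt.differentiableWithinAt
    · intro x hx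
      rw [interior_Ioo] at hx
      rw [(hη_deriv x hx).deriv]
      have h1 := hL_ge x hx
      have h2 : At x = A x := hAeq x (by rw [abs_of_pos hx.1]; exact hx.2.le)
      have h3 : 0 ≤ A x := hAnonneg x (by rw [abs_of_pos hx.1]; exact hx.2.le)
      have h4 : x * -(c * A x) ≤ x * L x := mul_le_mul_of_nonneg_left h1 hx.1.le
      rw [h2]
      nlinarith
  have hft0 : ft 0 = 0 := by simp [hft_def]
  have hη_tendsto : Tendsto (fun s => s * B s + c * ft s) (𝓝[>] (0:ℝ)) (𝓝 0) := by
    have hRhalf : Metric.closedBall (0:ℂ) (R/2) ⊆ Metric.ball 0 R :=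
      Metric.closedBall_subset_ball (by linarith)
    obtain ⟨M₀, hM₀⟩ := (isCompact_closedBall (0:ℂ) (R/2)).exists_bound_of_continuousOn
      (f := Dv) (hDvc.mono hRhalf)
    have hBbd : ∀ s : ℝ, |s| ≤ R/2 → |B s| ≤ M₀ * |π - (-π)| := by
      intro s hs
      rw [hB_def, ← Real.norm_eq_abs]
      apply intervalIntegral.norm_integral_le_of_norm_le_const
      intro θ _
      calc ‖Dv (cP s θ) (cdir θ)‖ ≤ ‖Dv (cP s θ)‖ * ‖cdir θ‖ := (Dv (cP s θ)).le_opNorm _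
        _ = ‖Dv (cP s θ)‖ := by rw [norm_cdir, mul_one]
        _ ≤ M₀ := hM₀ _ (by rw [Metric.mem_closedBall, dist_zero_right, norm_cP]; exact hs)
    have h1 : Tendsto (fun s => s * B s) (𝓝[>] (0:ℝ)) (𝓝 0) := by
      apply squeeze_zero_norm' (a := fun s => |s| * (M₀ * |π - (-π)|))
      · filter_upwards [Ioo_mem_nhdsGT_of_mem
          (show (0:ℝ) ∈ Set.Ico (0:ℝ) (R/2) from ⟨le_refl _, by linarith⟩)] with s hs
        rw [Real.norm_eq_abs, abs_mul]
        exact mul_le_mul_of_nonneg_left (hBbd s (by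
          rw [abs_of_pos hs.1]; exact hs.2.le)) (abs_nonneg _)
      · have : Tendsto (fun s : ℝ => |s|) (𝓝[>] (0:ℝ)) (𝓝 0) := by
          have := (_root_.continuous_abs.tendsto (0:ℝ)).mono_left
            (nhdsWithin_le_nhds (s := Set.Ioi (0:ℝ)))
          simpa using this
        simpa using this.mul_const (M₀ * |π - (-π)|)
    have h2 : Tendsto (fun s => c * ft s) (𝓝[>] (0:ℝ)) (𝓝 0) := by
      have := ((hft_cont.tendsto 0).mono_left
        (nhdsWithin_le_nhds (s := Set.Ioi (0:ℝ)))).const_mul c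
      rw [hft0, mul_zero] at this
      exact this
    simpa using h1.add h2
  have hη_nonneg : ∀ s ∈ Set.Ioo (0:ℝ) R, 0 ≤ s * B s + c * ft s := by
    intro s hs
    apply le_of_tendsto hη_tendsto
    filter_upwards [Ioo_mem_nhdsGT_of_mem (Set.mem_Ico.2 ⟨le_refl (0:ℝ), hs.1⟩)] with t ht
    exact hη_mono ⟨ht.1, lt_trans ht.2 hs.2⟩ hs ht.2.le
  -- ψ := s²·At s + (c·s²/2 - 2)·ft s
  have hψ_deriv : ∀ s ∈ Set.Ioo (0:ℝ) R,
      HasDerivAt (fun s => s^2 * At s + (c*s^2/2 - 2) * ft s)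
        (s * (s * B s + c * ft s) + (c*s^3/2) * At s) s := by
    intro s hs
    have h1 : HasDerivAt (fun s : ℝ => s^2 * At s) ((2*s) * At s + s^2 * B s) s := by
      have := (hasDerivAt_pow 2 s).mul (hAt_deriv s hs)
      refine this.congr_deriv ?_
      ring
    have hq : HasDerivAt (fun s : ℝ => c*s^2/2 - 2) (c*s) s := by
      have := (((hasDerivAt_pow 2 s).const_mul c).div_const 2).sub_const 2
      refine this.congr_deriv ?_
      ring
    have := h1.add (hq.mul (hft_deriv s))
    refine this.congr_deriv ?_
    ring
  have hψ_mono : MonotoneOn (fun s => s^2 * At s + (c*s^2/2 - 2) * ft s) (Set.Ioo 0 R) := by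
    apply monotoneOn_of_deriv_nonneg (convex_Ioo 0 R)
    · exact fun x hx => ((hψ_deriv x hx).differentiableAt.continuousAt).continuousWithinAt
    · intro x hx
      rw [interior_Ioo] at hx
      exact (hψ_deriv x hx).differentiableAt.differentiableWithinAt
    · intro x hx
      rw [interior_Ioo] at hx
      rw [(hψ_deriv x hx).deriv]
      have h1 := hη_nonneg x hx
      have h2 : 0 ≤ At x := by
        rw [hAeq x (by rw [abs_of_pos hx.1]; exact hx.2.le)]
        exact hAnonneg x (by rw [abs_of_pos hx.1]; exact hx.2.le)
      have h3 : 0 ≤ x * (x * B x + c * ft x) := mul_nonneg hx.1.le h1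
      have h4 : 0 ≤ (c*x^3/2) * At x := by
        apply mul_nonneg _ h2
        have : 0 < x^3 := pow_pos hx.1 3
        positivity
      linarith
  have hψ_tendsto : Tendsto (fun s => s^2 * At s + (c*s^2/2 - 2) * ft s)
      (𝓝[>] (0:ℝ)) (𝓝 0) := by
    have hcont : Continuous (fun s => s^2 * At s + (c*s^2/2 - 2) * ft s) := by
      apply Continuous.add
      · exact (continuous_pow 2).mul hAt_cont
      · exact (((continuous_const.mul (continuous_pow 2)).div_const 2).sub
          continuous_const).mul hft_cont
    have := (hcont.tendsto 0).mono_left (nhdsWithin_le_nhds (s := Set.Ioi (0:ℝ)))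
    simpa [hft0] using this
  have hψ_nonneg : ∀ s ∈ Set.Ioo (0:ℝ) R, 0 ≤ s^2 * At s + (c*s^2/2 - 2) * ft s := by
    intro s hs
    apply le_of_tendsto hψ_tendsto
    filter_upwards [Ioo_mem_nhdsGT_of_mem (Set.mem_Ico.2 ⟨le_refl (0:ℝ), hs.1⟩)] with t ht
    exact hψ_mono ⟨ht.1, lt_trans ht.2 hs.2⟩ hs ht.2.le
  -- the final function
  have hΦ_deriv : ∀ r ∈ Set.Ioo (0:ℝ) R,
      HasDerivAt (fun r => Real.exp (c / 4 * r ^ 2) * ((1 / r ^ 2) * ft r))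
        (Real.exp (c / 4 * r ^ 2) / r^3 * (r^2 * At r + (c*r^2/2 - 2) * ft r)) r := by
    rintro r ⟨hr0, hrR⟩
    have hr2 : (r:ℝ)^2 ≠ 0 := pow_ne_zero 2 (ne_of_gt hr0)
    have hexp : HasDerivAt (fun r : ℝ => Real.exp (c / 4 * r ^ 2))
        (Real.exp (c / 4 * r ^ 2) * (c / 4 * (2 * r))) r := by
      have := ((hasDerivAt_pow 2 r).const_mul (c/4)).exp
      convert this using 1
      ring
    have hinv : HasDerivAt (fun r : ℝ => 1 / r ^ 2) (-(2*r) / (r^2)^2) r := by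
      have := (hasDerivAt_pow 2 r).inv hr2
      simp only [one_div]
      refine this.congr_deriv ?_
      ring
    have hmul1 : HasDerivAt (fun r : ℝ => (1 / r ^ 2) * ft r)
        (-(2*r) / (r^2)^2 * ft r + (1 / r ^ 2) * (r * At r)) r := hinv.mul (hft_deriv r)
    have := hexp.mul hmul1
    refine this.congr_deriv ?_
    field_simp
    ring
  have hΦ_mono : MonotoneOn (fun r => Real.exp (c / 4 * r ^ 2) * ((1 / r ^ 2) * ft r))
      (Set.Ioo 0 R) := by
    apply monotoneOn_of_deriv_nonneg (convex_Ioo 0 R)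
    · exact fun x hx => ((hΦ_deriv x hx).differentiableAt.continuousAt).continuousWithinAt
    · intro x hx
      rw [interior_Ioo] at hx
      exact (hΦ_deriv x hx).differentiableAt.differentiableWithinAt
    · intro x hx
      rw [interior_Ioo] at hx
      rw [(hΦ_deriv x hx).deriv]
      apply mul_nonneg
      · exact le_of_lt (div_pos (Real.exp_pos _) (pow_pos hx.1 3))
      · exact hψ_nonneg x hx
  -- identify the integral with ft
  have hval : ∀ r ∈ Set.Ioo (0:ℝ) R, (∫ z in Metric.ball (0:ℂ) r, v z) = ft r := by
    rintro r ⟨hr0, hrR⟩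
    have h1 : ∫ z in Metric.ball (0:ℂ) r, v z = ∫ z in Metric.ball (0:ℂ) r, Vt z := by
      apply setIntegral_congr_fun measurableSet_ball
      intro z hz
      exact (hVt z (Metric.closedBall_subset_closedBall hrR.le
        (Metric.ball_subset_closedBall hz))).symm
    rw [h1, polar_area Vt Vt.continuous hr0]
  intro a ha b hb hab
  have h1 := hval a ha
  have h2 := hval b hb
  simp only
  rw [h1, h2]
  exact hΦ_mono ha hb hab

section Main
open Set Metric intervalIntegral Filter Real Topology

/-- Partial derivative in direction `i`. -/
noncomputable def pderiv2 (i : Fin 2) (f : EuclideanSpace ℝ (Fin 2) → ℝ)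
    (x : EuclideanSpace ℝ (Fin 2)) : ℝ :=
  fderiv ℝ f x (EuclideanSpace.single i 1)

/-- The analyst's Laplacian `div(∇u)` as a sum of second partial derivatives. -/
noncomputable def lap2 (f : EuclideanSpace ℝ (Fin 2) → ℝ)
    (x : EuclideanSpace ℝ (Fin 2)) : ℝ :=
  ∑ i : Fin 2, pderiv2 i (pderiv2 i f) x

/-- Monotonicity formula: if `u ≥ 0` is `C²` on the closed disk of radius `R` and satisfies
`Δu ≤ c·u` with the geometer's Laplacian `Δ = -div∇`, then
`r ↦ e^{(c/4)r²}·(1/r²)∫_{D_r} u` is non-decreasing on `(0,R)`. -/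
theorem stmt0 (R c : ℝ) (hR : 0 < R) (hc : 0 < c)
    (u : EuclideanSpace ℝ (Fin 2) → ℝ)
    (hu : ContDiffOn ℝ 2 u (Metric.closedBall 0 R))
    (hupos : ∀ x ∈ Metric.closedBall (0 : EuclideanSpace ℝ (Fin 2)) R, 0 ≤ u x)
    (hineq : ∀ x ∈ Metric.closedBall (0 : EuclideanSpace ℝ (Fin 2)) R,
      -lap2 u x ≤ c * u x) :
    MonotoneOn
      (fun r : ℝ => Real.exp (c / 4 * r ^ 2) *
        ((1 / r ^ 2) * ∫ x in Metric.ball (0 : EuclideanSpace ℝ (Fin 2)) r, u x))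
      (Set.Ioo 0 R) := by
  set ψe : ℂ ≃ₗᵢ[ℝ] EuclideanSpace ℝ (Fin 2) :=
    Complex.isometryOfOrthonormal (EuclideanSpace.basisFun (Fin 2) ℝ) with hψe_def
  set ψL : ℂ ≃L[ℝ] EuclideanSpace ℝ (Fin 2) := ψe.toContinuousLinearEquiv with hψL_def
  have hψLcoe : ⇑ψL = ⇑ψe := ψe.coe_toContinuousLinearEquiv
  set v : ℂ → ℝ := u ∘ ψe with hv_def
  have hψnorm : ∀ z : ℂ, ‖ψe z‖ = ‖z‖ := fun z => ψe.norm_map z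
  have hψmem : ∀ {r : ℝ} {z : ℂ}, z ∈ Metric.closedBall (0:ℂ) r → ψe z ∈ Metric.closedBall (0:EuclideanSpace ℝ (Fin 2)) r := by
    intro r z hz
    rw [Metric.mem_closedBall, dist_zero_right] at hz ⊢
    rw [hψnorm]; exact hz
  -- smoothness of v
  have hψcd : ContDiff ℝ 2 ⇑ψe := by
    rw [← hψLcoe]; exact ψL.contDiff
  have hv : ContDiffOn ℝ 2 v (Metric.closedBall 0 R) := by
    rw [hv_def]
    exact hu.comp hψcd.contDiffOn (fun z hz => hψmem hz)
  have hψ0 : ψe (1:ℂ) = EuclideanSpace.single (0 : Fin 2) 1 := by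
    rw [Complex.isometryOfOrthonormal_apply]
    simp [EuclideanSpace.basisFun_apply (ι := Fin 2) ℝ 0]
  have hψ1 : ψe Complex.I = EuclideanSpace.single (1 : Fin 2) 1 := by
    rw [Complex.isometryOfOrthonormal_apply]
    simp [EuclideanSpace.basisFun_apply (ι := Fin 2) ℝ 1]
  -- fderiv transfer
  have hfd : ∀ (f : EuclideanSpace ℝ (Fin 2) → ℝ) (z : ℂ) (b : ℂ),
      fderiv ℝ (f ∘ ψe) z b = fderiv ℝ f (ψe z) (ψe b) := by
    intro f z b
    have h := ψL.comp_right_fderiv (f := f) (x := z)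
    rw [hψLcoe] at h
    rw [h]
    simp [hψLcoe]
  have hlap : ∀ z : ℂ,
      fderiv ℝ (fun w => fderiv ℝ v w 1) z 1
        + fderiv ℝ (fun w => fderiv ℝ v w Complex.I) z Complex.I = lap2 u (ψe z) := by
    intro z
    have h1 : ∀ b : ℂ, (fun w => fderiv ℝ v w b) = (fun y => fderiv ℝ u y (ψe b)) ∘ ψe := by
      intro b
      funext w
      exact hfd u w b
    rw [h1 1, h1 Complex.I, hfd _ z 1, hfd _ z Complex.I, hψ0, hψ1]
    rw [lap2, Fin.sum_univ_two]
    rfl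
  -- integral transfer
  have hmp : MeasurePreserving ψe := ψe.measurePreserving
  have hint : ∀ r : ℝ, (∫ x in Metric.ball (0:EuclideanSpace ℝ (Fin 2)) r, u x) = ∫ z in Metric.ball (0:ℂ) r, v z := by
    intro r
    have hemb : MeasurableEmbedding ψe :=
      ψe.toHomeomorph.toMeasurableEquiv.measurableEmbedding
    have := hmp.setIntegral_preimage_emb hemb u (Metric.ball (0:EuclideanSpace ℝ (Fin 2)) r)
    rw [← this]
    congr 1
    rw [show ψe ⁻¹' Metric.ball (0:EuclideanSpace ℝ (Fin 2)) r = Metric.ball (ψe.symm 0) r from ψe.preimage_ball 0 r]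
    rw [map_zero ψe.symm]
  have hmain := key R c hR hc v hv
    (fun z hz => hupos _ (hψmem hz))
    (by
      intro z hz
      rw [hlap z]
      exact hineq _ (hψmem hz))
  intro a ha b hb hab
  have := hmain ha hb hab
  simp only at this ⊢
  rw [hint a, hint b]
  exact this

end Main
end
end Helpers
end

section
/- If f : (0,R) → ℝ is defined by f(r) = (1/r²) ∫_{D_r} u for a C² function u with -Δu ≤ c·u (Euclidean Laplacian convention Δ = div ∇) and u ≥ 0, then f'(r) ≥ -(c r / 2) f(r) for all r in (0,R). -/
open MeasureTheory Real Set

noncomputable section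

namespace Stmt2Aux

abbrev E2 : Type := EuclideanSpace ℝ (Fin 2)

def pe (θ : ℝ) : E2 := Real.cos θ • EuclideanSpace.single (0 : Fin 2) (1:ℝ)
  + Real.sin θ • EuclideanSpace.single (1 : Fin 2) (1:ℝ)

def pe' (θ : ℝ) : E2 := (-Real.sin θ) • EuclideanSpace.single (0 : Fin 2) (1:ℝ)
  + Real.cos θ • EuclideanSpace.single (1 : Fin 2) (1:ℝ)

lemma pe_apply0 (θ : ℝ) : pe θ 0 = Real.cos θ := by
  simp [pe, EuclideanSpace.single_apply]

lemma pe_apply1 (θ : ℝ) : pe θ 1 = Real.sin θ := by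
  simp [pe, EuclideanSpace.single_apply]

lemma norm_smul_pe (s θ : ℝ) : ‖s • pe θ‖ = |s| := by
  rw [EuclideanSpace.norm_eq]
  simp only [Fin.sum_univ_two, PiLp.smul_apply, smul_eq_mul, pe_apply0, pe_apply1]
  simp only [Real.norm_eq_abs, sq_abs]
  rw [show (s * Real.cos θ)^2 + (s * Real.sin θ)^2 = s^2 by
    have := Real.sin_sq_add_cos_sq θ; nlinarith]
  exact Real.sqrt_sq_eq_abs s

lemma smul_pe_mem_closedBall {s θ r : ℝ} (h : |s| ≤ r) :
    s • pe θ ∈ Metric.closedBall (0:E2) r := by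
  simp [Metric.mem_closedBall, dist_zero_right, norm_smul_pe, h]

lemma smul_pe_mem_ball {s θ r : ℝ} (h : |s| < r) :
    s • pe θ ∈ Metric.ball (0:E2) r := by
  simp [Metric.mem_ball, dist_zero_right, norm_smul_pe, h]

lemma continuous_pe : Continuous pe := by
  unfold pe
  exact (Real.continuous_cos.smul continuous_const).add
    (Real.continuous_sin.smul continuous_const)

lemma continuous_pe' : Continuous pe' := by
  unfold pe'
  exact ((Real.continuous_sin.neg).smul continuous_const).add
    (Real.continuous_cos.smul continuous_const)

lemma hasDerivAt_pe (θ : ℝ) : HasDerivAt pe (pe' θ) θ := by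
  unfold pe pe'
  exact ((Real.hasDerivAt_cos θ).smul_const _).add ((Real.hasDerivAt_sin θ).smul_const _)

lemma hasDerivAt_pe' (θ : ℝ) : HasDerivAt pe' (-pe θ) θ := by
  unfold pe pe'
  have h1 : HasDerivAt (fun θ => -Real.sin θ) (-Real.cos θ) θ := (Real.hasDerivAt_sin θ).neg
  have := (h1.smul_const (EuclideanSpace.single (0 : Fin 2) (1:ℝ))).add
    ((Real.hasDerivAt_cos θ).smul_const (EuclideanSpace.single (1 : Fin 2) (1:ℝ)))
  refine this.congr_deriv ?_
  module

lemma pe_pi : pe π = pe (-π) := by simp [pe]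

lemma pe'_pi : pe' π = pe' (-π) := by simp [pe']

def polarEquiv : (ℝ × ℝ) ≃ᵐ E2 :=
  ((MeasurableEquiv.toLp 2 (Fin 2 → ℝ)).symm.trans (MeasurableEquiv.finTwoArrow)).symm

lemma polarEquiv_measurePreserving : MeasurePreserving polarEquiv := by
  exact ((EuclideanSpace.volume_preserving_symm_measurableEquiv_toLp (Fin 2)).trans
    (volume_preserving_finTwoArrow ℝ)).symm _

lemma polarEquiv_apply (p : ℝ × ℝ) (i : Fin 2) :
    polarEquiv p i = ![p.1, p.2] i := rfl

lemma polarEquiv_symm_polar (s θ : ℝ) :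
    polarEquiv (polarCoord.symm (s, θ)) = s • pe θ := by
  ext i
  fin_cases i <;>
    simp [polarEquiv_apply, pe, EuclideanSpace.single_apply, polarCoord_symm_apply]

/-- Integrability of continuous functions on the angular interval. -/
lemma cont_intOn {h : ℝ → ℝ} (hh : Continuous h) : IntegrableOn h (Ioo (-π) π) :=
  (hh.continuousOn.integrableOn_compact isCompact_Icc).mono_set Ioo_subset_Icc_self

lemma polar_integral {r : ℝ} (g : E2 → ℝ)
    (hg : ContinuousOn g (Metric.closedBall 0 r)) :
    ∫ x in Metric.ball (0:E2) r, g x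
      = ∫ s in Ioo (0:ℝ) r, ∫ θ in Ioo (-π) π, s * g (s • pe θ) := by
  have hmb : MeasurableSet (polarEquiv ⁻¹' (Metric.ball (0:E2) r)) :=
    polarEquiv.measurable measurableSet_ball
  have step1 : ∫ x in Metric.ball (0:E2) r, g x
      = ∫ p in polarEquiv ⁻¹' (Metric.ball (0:E2) r), g (polarEquiv p) :=
    (polarEquiv_measurePreserving.setIntegral_preimage_emb
      polarEquiv.measurableEmbedding g _).symm
  rw [step1, ← integral_indicator hmb, ← integral_comp_polarCoord_symm]
  have key : ∀ p : ℝ × ℝ,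
      p.1 • (Set.indicator (polarEquiv ⁻¹' (Metric.ball (0:E2) r))
        (fun q => g (polarEquiv q)) (polarCoord.symm p))
      = Set.indicator (polarCoord.symm ⁻¹' (polarEquiv ⁻¹' (Metric.ball (0:E2) r)))
        (fun p : ℝ × ℝ => p.1 * g (polarEquiv (polarCoord.symm p))) p := by
    intro p
    by_cases h : polarCoord.symm p ∈ polarEquiv ⁻¹' (Metric.ball (0:E2) r)
    · rw [Set.indicator_of_mem h, Set.indicator_of_mem (Set.mem_preimage.2 h), smul_eq_mul]
    · rw [Set.indicator_of_notMem h,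
        Set.indicator_of_notMem (fun hh => h (Set.mem_preimage.1 hh)), smul_zero]
  simp_rw [key]
  have hcs : Continuous (fun p : ℝ × ℝ => (polarCoord.symm p : ℝ × ℝ)) := by
    have : (fun p : ℝ × ℝ => (polarCoord.symm p : ℝ × ℝ))
        = fun p : ℝ × ℝ => (p.1 * Real.cos p.2, p.1 * Real.sin p.2) := rfl
    rw [this]; fun_prop
  rw [setIntegral_indicator (hcs.measurable hmb)]
  have hset : polarCoord.target ∩
      (polarCoord.symm ⁻¹' (polarEquiv ⁻¹' (Metric.ball (0:E2) r)))
      = Ioo (0:ℝ) r ×ˢ Ioo (-π) π := by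
    ext ⟨s, θ⟩
    simp only [Set.mem_inter_iff, Set.mem_preimage, polarCoord_target, Set.mem_prod,
      Set.mem_Ioi, Set.mem_Ioo]
    constructor
    · rintro ⟨⟨hs, hθ⟩, hball⟩
      rw [show polarCoord.symm (s, θ) = ((s,θ).1 * Real.cos (s,θ).2,
        (s,θ).1 * Real.sin (s,θ).2) from rfl] at hball
      rw [show ((s * Real.cos θ, s * Real.sin θ) : ℝ × ℝ)
        = polarCoord.symm (s, θ) from rfl, polarEquiv_symm_polar] at hball
      simp only [Metric.mem_ball, dist_zero_right, norm_smul_pe] at hball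
      exact ⟨⟨hs, lt_of_abs_lt hball⟩, hθ⟩
    · rintro ⟨⟨hs0, hsr⟩, hθ⟩
      refine ⟨⟨hs0, hθ⟩, ?_⟩
      rw [show polarCoord.symm (s, θ) = ((s,θ).1 * Real.cos (s,θ).2,
        (s,θ).1 * Real.sin (s,θ).2) from rfl]
      rw [show ((s * Real.cos θ, s * Real.sin θ) : ℝ × ℝ)
        = polarCoord.symm (s, θ) from rfl, polarEquiv_symm_polar]
      simp only [Metric.mem_ball, dist_zero_right, norm_smul_pe]
      rwa [abs_of_pos hs0]
  rw [hset]
  by_cases hr : 0 < r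
  · have hcont : ContinuousOn (fun p : ℝ × ℝ => p.1 * g (p.1 • pe p.2))
        (Icc (0:ℝ) r ×ˢ Icc (-π) π) := by
      have hφ : Continuous (fun p : ℝ × ℝ => p.1 • pe p.2) :=
        continuous_fst.smul (continuous_pe.comp continuous_snd)
      have hmaps : Set.MapsTo (fun p : ℝ × ℝ => p.1 • pe p.2)
          (Icc (0:ℝ) r ×ˢ Icc (-π) π) (Metric.closedBall 0 r) := by
        rintro ⟨s, θ⟩ ⟨⟨h0, h1⟩, _⟩
        simp only [Metric.mem_closedBall, dist_zero_right, norm_smul_pe]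
        rwa [abs_of_nonneg h0]
      exact continuousOn_fst.mul (hg.comp hφ.continuousOn hmaps)
    have hint : IntegrableOn (fun p : ℝ × ℝ => p.1 * g (polarEquiv (polarCoord.symm p)))
        (Ioo (0:ℝ) r ×ˢ Ioo (-π) π) := by
      have : (fun p : ℝ × ℝ => p.1 * g (polarEquiv (polarCoord.symm p)))
          = fun p : ℝ × ℝ => p.1 * g (p.1 • pe p.2) := by
        funext p
        rw [show polarCoord.symm p = polarCoord.symm (p.1, p.2) from rfl, polarEquiv_symm_polar]
      rw [this]
      exact (hcont.integrableOn_compact (isCompact_Icc.prod isCompact_Icc)).mono_set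
        (Set.prod_mono Set.Ioo_subset_Icc_self Set.Ioo_subset_Icc_self)
    rw [Measure.volume_eq_prod, setIntegral_prod _ (by rwa [← Measure.volume_eq_prod])]
    refine setIntegral_congr_fun measurableSet_Ioo (fun s _ => ?_)
    refine setIntegral_congr_fun measurableSet_Ioo (fun θ _ => ?_)
    rw [show polarCoord.symm ((s,θ) : ℝ × ℝ) = polarCoord.symm (s, θ) from rfl,
      polarEquiv_symm_polar]
  · rw [Set.Ioo_eq_empty hr]
    simp

end Stmt2Aux

end

open MeasureTheory

set_option maxHeartbeats 4000000 in
open Real Set Stmt2Aux in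
/-- If `f(r) = (1/r²) ∫_{D_r} u` with `u` a nonnegative `C²` function satisfying `-Δu ≤ c·u`
(Euclidean convention `Δ = div∇`), then `f'(r) ≥ -(c r/2) f(r)` on `(0,R)`. -/
theorem stmt2 (R c : ℝ) (hR : 0 < R) (hc : 0 < c)
    (u : EuclideanSpace ℝ (Fin 2) → ℝ)
    (hu : ContDiffOn ℝ 2 u (Metric.closedBall 0 R))
    (hupos : ∀ x ∈ Metric.closedBall (0 : EuclideanSpace ℝ (Fin 2)) R, 0 ≤ u x)
    (hineq : ∀ x ∈ Metric.closedBall (0 : EuclideanSpace ℝ (Fin 2)) R,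
      -lap2 u x ≤ c * u x)
    (f : ℝ → ℝ)
    (hf : ∀ r ∈ Set.Ioo (0:ℝ) R,
      f r = (1 / r ^ 2) * ∫ x in Metric.ball (0 : EuclideanSpace ℝ (Fin 2)) r, u x) :
    ∀ r ∈ Set.Ioo (0:ℝ) R, -(c * r / 2) * f r ≤ deriv f r := by
  intro r hrIoo
  obtain ⟨hr0, hrR⟩ := hrIoo
  set r' : ℝ := (r + R) / 2 with hr'def
  have hrr' : r < r' := by simp only [hr'def]; linarith
  have hr'R : r' < R := by simp only [hr'def]; linarith
  have hr'0 : 0 < r' := by linarith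
  set B : Set E2 := Metric.ball (0:E2) R with hBdef
  have hBopen : IsOpen B := Metric.isOpen_ball
  have hBsub : B ⊆ Metric.closedBall 0 R := Metric.ball_subset_closedBall
  have huB : ContDiffOn ℝ 2 u B := hu.mono hBsub
  set D : E2 → (E2 →L[ℝ] ℝ) := fderiv ℝ u with hDdef
  have hD : ContDiffOn ℝ 1 D B := huB.fderiv_of_isOpen hBopen (by norm_num)
  set D2 : E2 → (E2 →L[ℝ] (E2 →L[ℝ] ℝ)) := fderiv ℝ D with hD2def
  have hDcont : ContinuousOn D B := hD.continuousOn
  have hD2cont : ContinuousOn D2 B := hD.continuousOn_fderiv_of_isOpen hBopen (le_refl _)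
  have hud : ∀ x ∈ B, HasFDerivAt u (D x) x := by
    intro x hx
    exact (huB.differentiableOn two_ne_zero).differentiableAt
      (hBopen.mem_nhds hx) |>.hasFDerivAt
  have hDd : ∀ x ∈ B, HasFDerivAt D (D2 x) x := by
    intro x hx
    exact (hD.differentiableOn one_ne_zero).differentiableAt (hBopen.mem_nhds hx) |>.hasFDerivAt
  -- membership helpers
  have hmemB : ∀ {s : ℝ}, |s| < R → ∀ θ : ℝ, s • pe θ ∈ B := fun h θ => smul_pe_mem_ball h
  have hmemR : ∀ {s : ℝ}, |s| ≤ R → ∀ θ : ℝ, s • pe θ ∈ Metric.closedBall (0:E2) R :=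
    fun h θ => smul_pe_mem_closedBall h
  -- bounds on the compact ball of radius r'
  obtain ⟨M1, hM1⟩ : ∃ M1 : ℝ, ∀ x ∈ Metric.closedBall (0:E2) r', ‖D x‖ ≤ M1 :=
    (isCompact_closedBall 0 r').exists_bound_of_continuousOn
      (hDcont.mono (Metric.closedBall_subset_ball hr'R))
  obtain ⟨M2, hM2⟩ : ∃ M2 : ℝ, ∀ x ∈ Metric.closedBall (0:E2) r', ‖D2 x‖ ≤ M2 := by
    exact (isCompact_closedBall (0:E2) r').exists_bound_of_continuousOn
      (f := D2) (hD2cont.mono (Metric.closedBall_subset_ball hr'R))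
  -- the angular integrals
  set S : ℝ → ℝ := fun s => ∫ θ in Ioo (-π) π, u (s • pe θ) with hSdef
  set T : ℝ → ℝ := fun s => ∫ θ in Ioo (-π) π, D (s • pe θ) (pe θ) with hTdef
  set W : ℝ → ℝ := fun s => ∫ θ in Ioo (-π) π, D2 (s • pe θ) (pe θ) (pe θ) with hWdef
  set L : ℝ → ℝ := fun s => ∫ θ in Ioo (-π) π, lap2 u (s • pe θ) with hLdef
  set F : ℝ → ℝ := fun s => ∫ x in Metric.ball (0:E2) s, u x with hFdef
  -- pointwise second-derivative facts
  have hlap : ∀ x ∈ B, lap2 u x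
      = D2 x (EuclideanSpace.single 0 1) (EuclideanSpace.single 0 1)
        + D2 x (EuclideanSpace.single 1 1) (EuclideanSpace.single 1 1) := by
    intro x hx
    have key : ∀ v : E2, fderiv ℝ (fun y => fderiv ℝ u y v) x
        = (D x).comp (0 : E2 →L[ℝ] E2) + (D2 x).flip v := by
      intro v
      have h := (hDd x hx).clm_apply (hasFDerivAt_const v x)
      simpa only [← hDdef] using h.fderiv
    have hp : ∀ i : Fin 2, pderiv2 i u = fun y => fderiv ℝ u y (EuclideanSpace.single i 1) :=
      fun i => rfl
    simp only [lap2, pderiv2, hp, Fin.sum_univ_two]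
    rw [key, key]
    simp
  have htrace : ∀ x ∈ B, ∀ θ : ℝ,
      D2 x (pe θ) (pe θ) + D2 x (pe' θ) (pe' θ) = lap2 u x := by
    intro x hx θ
    rw [hlap x hx]
    have hab : Real.sin θ ^ 2 + Real.cos θ ^ 2 = 1 := Real.sin_sq_add_cos_sq θ
    simp only [pe, pe', map_add, _root_.map_smul, ContinuousLinearMap.add_apply,
      ContinuousLinearMap.smul_apply, smul_eq_mul]
    linear_combination (D2 x (EuclideanSpace.single 0 1) (EuclideanSpace.single 0 1)
      + D2 x (EuclideanSpace.single 1 1) (EuclideanSpace.single 1 1)) * hab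
  -- continuity of angular integrands
  have hcontu : ∀ {s : ℝ}, |s| ≤ R → Continuous (fun θ => u (s • pe θ)) := by
    intro s hs
    exact hu.continuousOn.comp_continuous (continuous_pe.const_smul s)
      (fun θ => hmemR hs θ)
  have hcontDraw : ∀ {s : ℝ}, |s| < R → Continuous (fun θ => D (s • pe θ)) := by
    intro s hs
    exact hDcont.comp_continuous (continuous_pe.const_smul s) (fun θ => hmemB hs θ)
  have hcontD : ∀ {s : ℝ}, |s| < R → ∀ v : ℝ → E2, Continuous v →
      Continuous (fun θ => D (s • pe θ) (v θ)) := by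
    intro s hs v hv
    exact (hcontDraw hs).clm_apply hv
  have hcontD2 : ∀ {s : ℝ}, |s| < R → ∀ v : ℝ → E2, Continuous v →
      Continuous (fun θ => D2 (s • pe θ) (v θ) (v θ)) := by
    intro s hs v hv
    have hbase : Continuous (fun θ => D2 (s • pe θ)) :=
      hD2cont.comp_continuous (continuous_pe.const_smul s) (fun θ => hmemB hs θ)
    exact (hbase.clm_apply hv).clm_apply hv
  -- differentiation under the integral sign
  have hnormpe : ∀ θ : ℝ, ‖pe θ‖ = 1 := by
    intro θ
    have := norm_smul_pe 1 θ
    simpa using this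
  have habsball : ∀ {s₀ : ℝ}, s₀ ∈ Ioo (-r') r' →
      ∀ s ∈ Metric.ball s₀ (r' - |s₀|), |s| < r' := by
    intro s₀ hs₀ s hs
    rw [Metric.mem_ball, Real.dist_eq] at hs
    have h1 : |s| ≤ |s₀| + |s - s₀| := by
      have := abs_sub_abs_le_abs_sub s s₀; linarith [abs_nonneg (s - s₀), le_abs_self (|s|-|s₀|)]
    linarith
  have hS' : ∀ s₀ ∈ Ioo (-r') r', HasDerivAt S (T s₀) s₀ := by
    intro s₀ hs₀
    have hε : 0 < r' - |s₀| := sub_pos.2 (abs_lt.2 ⟨hs₀.1, hs₀.2⟩)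
    have key := hasDerivAt_integral_of_dominated_loc_of_deriv_le
      (μ := volume.restrict (Ioo (-π) π))
      (F := fun s θ => u (s • pe θ)) (F' := fun s θ => D (s • pe θ) (pe θ))
      (bound := fun _ => M1) (x₀ := s₀) (Metric.ball_mem_nhds s₀ hε)
      ?_ ?_ ?_ ?_ ?_ ?_
    · exact key.2
    · refine Filter.eventually_of_mem (Metric.ball_mem_nhds _ hε) (fun s hs => ?_)
      exact (hcontu (le_of_lt (lt_trans (habsball hs₀ s hs) hr'R))).aestronglyMeasurable
    · exact cont_intOn (hcontu (by linarith [(abs_lt.2 ⟨hs₀.1, hs₀.2⟩)]))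
    · exact ((hcontD (lt_trans (abs_lt.2 ⟨hs₀.1, hs₀.2⟩) hr'R)) pe
        continuous_pe).aestronglyMeasurable
    · refine Filter.Eventually.of_forall (fun θ => fun s hs => ?_)
      have hx : s • pe θ ∈ Metric.closedBall (0:E2) r' :=
        smul_pe_mem_closedBall (le_of_lt (habsball hs₀ s hs))
      calc ‖D (s • pe θ) (pe θ)‖ ≤ ‖D (s • pe θ)‖ * ‖pe θ‖ :=
            ContinuousLinearMap.le_opNorm _ _
        _ ≤ M1 := by rw [hnormpe θ, mul_one]; exact hM1 _ hx
    · exact cont_intOn continuous_const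
    · refine Filter.Eventually.of_forall (fun θ => fun s hs => ?_)
      have hx : s • pe θ ∈ B := hmemB (lt_trans (habsball hs₀ s hs) hr'R) θ
      have hsm : HasDerivAt (fun y : ℝ => y • pe θ) (pe θ) s := by
        simpa using (hasDerivAt_id s).smul_const (pe θ)
      exact (hud _ hx).comp_hasDerivAt s hsm
  have hT' : ∀ s₀ ∈ Ioo (-r') r', HasDerivAt T (W s₀) s₀ := by
    intro s₀ hs₀
    have hε : 0 < r' - |s₀| := sub_pos.2 (abs_lt.2 ⟨hs₀.1, hs₀.2⟩)
    have key := hasDerivAt_integral_of_dominated_loc_of_deriv_le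
      (μ := volume.restrict (Ioo (-π) π))
      (F := fun s θ => D (s • pe θ) (pe θ))
      (F' := fun s θ => D2 (s • pe θ) (pe θ) (pe θ))
      (bound := fun _ => M2) (x₀ := s₀) (Metric.ball_mem_nhds s₀ hε)
      ?_ ?_ ?_ ?_ ?_ ?_
    · exact key.2
    · refine Filter.eventually_of_mem (Metric.ball_mem_nhds _ hε) (fun s hs => ?_)
      exact ((hcontD (lt_trans (habsball hs₀ s hs) hr'R)) pe
        continuous_pe).aestronglyMeasurable
    · exact cont_intOn ((hcontD (lt_trans (abs_lt.2 ⟨hs₀.1, hs₀.2⟩) hr'R)) pe continuous_pe)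
    · exact ((hcontD2 (lt_trans (abs_lt.2 ⟨hs₀.1, hs₀.2⟩) hr'R)) pe
        continuous_pe).aestronglyMeasurable
    · refine Filter.Eventually.of_forall (fun θ => fun s hs => ?_)
      have hx : s • pe θ ∈ Metric.closedBall (0:E2) r' :=
        smul_pe_mem_closedBall (le_of_lt (habsball hs₀ s hs))
      calc ‖D2 (s • pe θ) (pe θ) (pe θ)‖
          ≤ ‖D2 (s • pe θ) (pe θ)‖ * ‖pe θ‖ := ContinuousLinearMap.le_opNorm _ _
        _ ≤ (‖D2 (s • pe θ)‖ * ‖pe θ‖) * ‖pe θ‖ :=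
            mul_le_mul_of_nonneg_right (ContinuousLinearMap.le_opNorm _ _) (norm_nonneg _)
        _ ≤ M2 := by rw [hnormpe θ, mul_one, mul_one]; exact hM2 _ hx
    · exact cont_intOn continuous_const
    · refine Filter.Eventually.of_forall (fun θ => fun s hs => ?_)
      have hx : s • pe θ ∈ B := hmemB (lt_trans (habsball hs₀ s hs) hr'R) θ
      have hsm : HasDerivAt (fun y : ℝ => y • pe θ) (pe θ) s := by
        simpa using (hasDerivAt_id s).smul_const (pe θ)
      have hc : HasDerivAt (fun y : ℝ => D (y • pe θ)) (D2 (s • pe θ) (pe θ)) s :=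
        (hDd _ hx).comp_hasDerivAt s hsm
      have := hc.clm_apply (hasDerivAt_const s (pe θ))
      simpa using this
  -- the angular FTC identity
  have hTW : ∀ s ∈ Ioo (0:ℝ) r', T s + s * W s = s * L s := by
    intro s hs
    have hsR : |s| < R := by rw [abs_of_pos hs.1]; linarith [hs.2]
    set Φ : ℝ → ℝ := fun θ => D (s • pe θ) (pe' θ) with hΦdef
    set Φ' : ℝ → ℝ := fun θ => s * D2 (s • pe θ) (pe' θ) (pe' θ) - D (s • pe θ) (pe θ)
      with hΦ'def
    have hΦd : ∀ θ : ℝ, HasDerivAt Φ (Φ' θ) θ := by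
      intro θ
      have hx : s • pe θ ∈ B := hmemB hsR θ
      have hγ : HasDerivAt (fun θ : ℝ => s • pe θ) (s • pe' θ) θ :=
        (hasDerivAt_pe θ).const_smul s
      have hc : HasDerivAt (fun θ : ℝ => D (s • pe θ)) (D2 (s • pe θ) (s • pe' θ)) θ :=
        (hDd _ hx).comp_hasDerivAt θ hγ
      have h := hc.clm_apply (hasDerivAt_pe' θ)
      have heq : D2 (s • pe θ) (s • pe' θ) (pe' θ) + D (s • pe θ) (-pe θ) = Φ' θ := by
        rw [_root_.map_smul, map_neg]
        simp only [ContinuousLinearMap.smul_apply, smul_eq_mul, hΦ'def]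
        ring
      rw [heq] at h
      exact h
    have hΦ'cont : Continuous Φ' := by
      exact (continuous_const.mul ((hcontD2 hsR) pe' continuous_pe')).sub
        ((hcontD hsR) pe continuous_pe)
    have hFTC : ∫ θ in Ioo (-π) π, Φ' θ = 0 := by
      rw [← integral_Ioc_eq_integral_Ioo,
        ← intervalIntegral.integral_of_le (by linarith [Real.pi_pos] : -π ≤ π)]
      rw [intervalIntegral.integral_eq_sub_of_hasDerivAt (fun θ _ => hΦd θ)
        (hΦ'cont.intervalIntegrable _ _)]
      simp only [hΦdef, pe_pi, pe'_pi, sub_self]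
    have hint1 : IntegrableOn (fun θ => s * D2 (s • pe θ) (pe θ) (pe θ)) (Ioo (-π) π) :=
      cont_intOn (continuous_const.mul ((hcontD2 hsR) pe continuous_pe))
    have hint2 : IntegrableOn Φ' (Ioo (-π) π) := cont_intOn hΦ'cont
    have hint3 : IntegrableOn (fun θ => D (s • pe θ) (pe θ)) (Ioo (-π) π) :=
      cont_intOn ((hcontD hsR) pe continuous_pe)
    have hcongr : (fun θ => s * lap2 u (s • pe θ))
        = fun θ => (s * D2 (s • pe θ) (pe θ) (pe θ)) + (Φ' θ + D (s • pe θ) (pe θ)) := by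
      funext θ
      rw [← htrace _ (hmemB hsR θ) θ]
      simp only [hΦ'def]
      ring
    have : s * L s = ∫ θ in Ioo (-π) π, s * lap2 u (s • pe θ) := by
      rw [integral_const_mul]
    have hint23 : IntegrableOn (fun θ => Φ' θ + D (s • pe θ) (pe θ)) (Ioo (-π) π) :=
      cont_intOn (hΦ'cont.add ((hcontD hsR) pe continuous_pe))
    rw [this, hcongr, integral_add hint1 hint23, integral_add hint2 hint3, hFTC]
    simp only [hWdef, hTdef]
    rw [integral_const_mul]
    ring
  -- the PDE inequality, integrated over angles
  have hlapcont : ∀ {s : ℝ}, |s| < R → Continuous (fun θ => lap2 u (s • pe θ)) := by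
    intro s hs
    have heq : (fun θ => lap2 u (s • pe θ))
        = fun θ => D2 (s • pe θ) (pe θ) (pe θ) + D2 (s • pe θ) (pe' θ) (pe' θ) := by
      funext θ
      rw [← htrace _ (hmemB hs θ) θ]
    rw [heq]
    exact ((hcontD2 hs) pe continuous_pe).add ((hcontD2 hs) pe' continuous_pe')
  have hLS : ∀ s ∈ Icc (0:ℝ) r', -(c * S s) ≤ L s := by
    intro s hs
    have hsR : |s| < R := by rw [abs_of_nonneg hs.1]; linarith [hs.2]
    have key : 0 ≤ ∫ θ in Ioo (-π) π, (lap2 u (s • pe θ) + c * u (s • pe θ)) := by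
      refine setIntegral_nonneg measurableSet_Ioo (fun θ _ => ?_)
      have := hineq _ (hmemR (le_of_lt hsR) θ)
      linarith
    rw [integral_add (cont_intOn (hlapcont hsR))
      (cont_intOn (h := fun θ => c * u (s • pe θ)) (continuous_const.mul (hcontu (le_of_lt hsR)))), integral_const_mul] at key
    simp only [hLdef, hSdef]
    linarith
  have hSpos : ∀ s ∈ Icc (0:ℝ) r', 0 ≤ S s := by
    intro s hs
    refine setIntegral_nonneg measurableSet_Ioo (fun θ _ => ?_)
    exact hupos _ (hmemR (by rw [abs_of_nonneg hs.1]; linarith [hs.2]) θ)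
  -- polar representation of F
  have hFs : ∀ s ∈ Ioc (0:ℝ) r', F s = ∫ t in (0:ℝ)..s, t * S t := by
    intro s hs
    have hpol := polar_integral (r := s) u
      (hu.continuousOn.mono (Metric.closedBall_subset_closedBall (by linarith [hs.2])))
    have hinner : ∀ t : ℝ, (∫ θ in Ioo (-π) π, t * u (t • pe θ)) = t * S t := by
      intro t
      rw [integral_const_mul]
    simp only [hFdef]
    rw [hpol]
    rw [intervalIntegral.integral_of_le hs.1.le, integral_Ioc_eq_integral_Ioo]
    exact setIntegral_congr_fun measurableSet_Ioo (fun t _ => hinner t)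
  have hψcont : ∀ t ∈ Ioo (-r') r', ContinuousAt (fun y => y * S y) t := by
    intro t ht
    exact continuousAt_id.mul (hS' t ht).continuousAt
  have hψii : ∀ s ∈ Ico (0:ℝ) r', IntervalIntegrable (fun y => y * S y) volume 0 s := by
    intro s hs
    refine ContinuousOn.intervalIntegrable (fun t ht => ?_)
    rw [uIcc_of_le hs.1] at ht
    exact (hψcont t ⟨by linarith [ht.1], lt_of_le_of_lt ht.2 hs.2⟩).continuousWithinAt
  have hGd : ∀ s ∈ Ioo (-r') r', 0 ≤ s →
      HasDerivAt (fun y => ∫ t in (0:ℝ)..y, t * S t) (s * S s) s := by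
    intro s hs hs0
    refine intervalIntegral.integral_hasDerivAt_right (hψii s ⟨hs0, hs.2⟩) ?_ (hψcont s hs)
    exact (ContinuousAt.stronglyMeasurableAtFilter isOpen_Ioo hψcont) s hs
  have hF' : ∀ s ∈ Ioo (0:ℝ) r', HasDerivAt F (s * S s) s := by
    intro s hs
    have hev : F =ᶠ[nhds s] (fun y => ∫ t in (0:ℝ)..y, t * S t) := by
      refine Filter.eventually_of_mem (isOpen_Ioo.mem_nhds (show s ∈ Ioo (0:ℝ) r' from hs))
        (fun y hy => ?_)
      exact hFs y ⟨hy.1, hy.2.le⟩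
    exact (hGd s ⟨by linarith [hs.1], hs.2⟩ hs.1.le).congr_of_eventuallyEq hev
  have hFmono : ∀ s ∈ Ioc (0:ℝ) r', ∀ t ∈ Ioc (0:ℝ) r', s ≤ t → F s ≤ F t := by
    intro s hs t ht hst
    have hti : IntegrableOn u (Metric.ball (0:E2) t) :=
      ((hu.continuousOn.mono
          (Metric.closedBall_subset_closedBall (by linarith [ht.2]))).integrableOn_compact
        (isCompact_closedBall _ _)).mono_set Metric.ball_subset_closedBall
    refine setIntegral_mono_set hti ?_ (HasSubset.Subset.eventuallyLE (Metric.ball_subset_ball hst))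
    refine (ae_restrict_iff' measurableSet_ball).2 (Filter.Eventually.of_forall (fun x hx => ?_))
    refine hupos x (Metric.ball_subset_closedBall (Metric.ball_subset_ball ?_ hx))
    linarith [ht.2]
  have hFpos : ∀ s ∈ Icc (0:ℝ) r', 0 ≤ F s := by
    intro s hs
    refine setIntegral_nonneg measurableSet_ball (fun x hx => ?_)
    refine hupos x (Metric.ball_subset_closedBall (Metric.ball_subset_ball ?_ hx))
    linarith [hs.2]
  have hFlim : Filter.Tendsto F (nhdsWithin 0 (Ioi 0)) (nhds 0) := by
    have hG0 : HasDerivAt (fun y => ∫ t in (0:ℝ)..y, t * S t) (0 * S 0) 0 :=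
      hGd 0 ⟨by linarith, hr'0⟩ le_rfl
    have hGcont : Filter.Tendsto (fun y => ∫ t in (0:ℝ)..y, t * S t) (nhds 0)
        (nhds (∫ t in (0:ℝ)..(0:ℝ), t * S t)) := hG0.continuousAt.tendsto
    rw [intervalIntegral.integral_same] at hGcont
    refine Filter.Tendsto.congr' ?_ (hGcont.mono_left nhdsWithin_le_nhds)
    refine Filter.eventuallyEq_of_mem (Ioo_mem_nhdsGT_of_mem ⟨le_refl (0:ℝ), hr'0⟩)
      (fun y hy => ?_)
    exact (hFs y ⟨hy.1, hy.2.le⟩).symm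
  -- first monotone quantity : s * T s + c * F s
  have hBineq : ∀ s ∈ Ioc (0:ℝ) r, -(c * F s) ≤ s * T s := by
    set g₁ : ℝ → ℝ := fun y => y * T y + c * F y with hg₁def
    have hg1d : ∀ y ∈ Ioo (0:ℝ) r', HasDerivAt g₁ (y * L y + c * (y * S y)) y := by
      intro y hy
      have hy' : y ∈ Ioo (-r') r' := ⟨by linarith [hy.1], hy.2⟩
      have h1 : HasDerivAt (fun z => z * T z) (1 * T y + y * W y) y :=
        (hasDerivAt_id y).mul (hT' y hy')
      have h2 := (hF' y hy).const_mul c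
      have h3 := h1.add h2
      refine h3.congr_deriv ?_
      rw [one_mul, ← hTW y hy]
    have hg1mono : MonotoneOn g₁ (Ioc 0 r) := by
      refine monotoneOn_of_hasDerivWithinAt_nonneg (convex_Ioc 0 r)
        (f' := fun y => y * L y + c * (y * S y)) ?_ ?_ ?_
      · intro y hy
        exact ((hg1d y ⟨hy.1, lt_of_le_of_lt hy.2 hrr'⟩).continuousAt).continuousWithinAt
      · rw [interior_Ioc]
        intro y hy
        exact ((hg1d y ⟨hy.1, lt_trans hy.2 hrr'⟩).hasDerivWithinAt)
      · rw [interior_Ioc]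
        intro y hy
        have hL := hLS y ⟨hy.1.le, by linarith [hy.2]⟩
        show 0 ≤ y * L y + c * (y * S y)
        nlinarith [mul_le_mul_of_nonneg_left hL hy.1.le]
    have htend : Filter.Tendsto g₁ (nhdsWithin 0 (Ioi 0)) (nhds 0) := by
      have hT0 : ContinuousAt T 0 := (hT' 0 ⟨by linarith, hr'0⟩).continuousAt
      have h1 : Filter.Tendsto (fun y => y * T y) (nhds 0) (nhds (0 * T 0)) :=
        continuousAt_id.mul hT0
      rw [zero_mul] at h1
      have h2 : Filter.Tendsto (fun y => c * F y) (nhdsWithin 0 (Ioi 0)) (nhds (c * 0)) :=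
        hFlim.const_mul c
      rw [mul_zero] at h2
      have := (h1.mono_left nhdsWithin_le_nhds).add h2
      rw [add_zero] at this
      exact this
    intro s hs
    have hle : 0 ≤ g₁ s := by
      refine le_of_tendsto htend ?_
      refine Filter.eventually_of_mem (Ioo_mem_nhdsGT_of_mem ⟨le_refl (0:ℝ), hs.1⟩)
        (fun ε hε => ?_)
      exact hg1mono ⟨hε.1, le_trans hε.2.le hs.2⟩ hs hε.2.le
    simp only [hg₁def] at hle
    linarith
  have hrIoc : r ∈ Ioc (0:ℝ) r' := ⟨hr0, hrr'.le⟩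
  -- second monotone quantity : s^2 * S s - 2 F s + c * F r * s^2/2
  have hAineq : -(c * F r * r ^ 2 / 2) ≤ r ^ 2 * S r - 2 * F r := by
    set g₂ : ℝ → ℝ := fun y => y ^ 2 * S y - 2 * F y + c * F r / 2 * y ^ 2 with hg₂def
    have hg2d : ∀ y ∈ Ioo (0:ℝ) r', HasDerivAt g₂ (y ^ 2 * T y + c * F r * y) y := by
      intro y hy
      have hy' : y ∈ Ioo (-r') r' := ⟨by linarith [hy.1], hy.2⟩
      have h1 : HasDerivAt (fun z : ℝ => z ^ 2 * S z)
          (((2:ℕ):ℝ) * y ^ 1 * S y + y ^ 2 * T y) y :=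
        (hasDerivAt_pow 2 y).mul (hS' y hy')
      have h2 := (hF' y hy).const_mul 2
      have h3 := (hasDerivAt_pow 2 y).const_mul (c * F r / 2)
      have h4 := (h1.sub h2).add h3
      refine h4.congr_deriv ?_
      push_cast
      ring
    have hg2mono : MonotoneOn g₂ (Ioc 0 r) := by
      refine monotoneOn_of_hasDerivWithinAt_nonneg (convex_Ioc 0 r)
        (f' := fun y => y ^ 2 * T y + c * F r * y) ?_ ?_ ?_
      · intro y hy
        exact ((hg2d y ⟨hy.1, lt_of_le_of_lt hy.2 hrr'⟩).continuousAt).continuousWithinAt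
      · rw [interior_Ioc]
        intro y hy
        exact ((hg2d y ⟨hy.1, lt_trans hy.2 hrr'⟩).hasDerivWithinAt)
      · rw [interior_Ioc]
        intro y hy
        have hB := hBineq y ⟨hy.1, hy.2.le⟩
        have hm : F y ≤ F r := hFmono y ⟨hy.1, by linarith [hy.2]⟩ r hrIoc hy.2.le
        have p1 : y * (-(c * F y)) ≤ y * (y * T y) :=
          mul_le_mul_of_nonneg_left hB hy.1.le
        have p2 : (c * y) * F y ≤ (c * y) * F r :=
          mul_le_mul_of_nonneg_left hm (mul_nonneg hc.le hy.1.le)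
        show 0 ≤ y ^ 2 * T y + c * F r * y
        nlinarith [p1, p2]
    have htend : Filter.Tendsto g₂ (nhdsWithin 0 (Ioi 0)) (nhds 0) := by
      have hS0 : ContinuousAt S 0 := (hS' 0 ⟨by linarith, hr'0⟩).continuousAt
      have h1 : Filter.Tendsto (fun y : ℝ => y ^ 2 * S y) (nhds 0) (nhds (0 ^ 2 * S 0)) :=
        (continuousAt_id.pow 2).mul hS0
      have h2 : Filter.Tendsto (fun y => 2 * F y) (nhdsWithin 0 (Ioi 0)) (nhds (2 * 0)) :=
        hFlim.const_mul 2
      have h3 : Filter.Tendsto (fun y : ℝ => c * F r / 2 * y ^ 2) (nhds 0)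
          (nhds (c * F r / 2 * 0 ^ 2)) :=
        (continuousAt_const.mul (continuousAt_id.pow 2))
      have hsum := ((h1.mono_left nhdsWithin_le_nhds).sub h2).add
        (h3.mono_left nhdsWithin_le_nhds)
      norm_num at hsum
      exact hsum
    have hle : 0 ≤ g₂ r := by
      refine le_of_tendsto htend ?_
      refine Filter.eventually_of_mem (Ioo_mem_nhdsGT_of_mem ⟨le_refl (0:ℝ), hr0⟩)
        (fun ε hε => ?_)
      exact hg2mono ⟨hε.1, hε.2.le⟩ ⟨hr0, le_refl r⟩ hε.2.le
    simp only [hg₂def] at hle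
    linarith
  -- compute deriv f r and conclude
  have hderiv : deriv f r = ((r * S r) * r ^ 2 - F r * (2 * r)) / (r ^ 2) ^ 2 := by
    have hdiv : HasDerivAt (fun y => F y / y ^ 2)
        (((r * S r) * r ^ 2 - F r * (2 * r)) / ((r ^ 2) ^ 2)) r := by
      have h := (hF' r ⟨hr0, hrr'⟩).div (hasDerivAt_pow 2 r)
        (by positivity : (r:ℝ) ^ 2 ≠ 0)
      refine h.congr_deriv ?_
      norm_num
    have hev : f =ᶠ[nhds r] fun y => F y / y ^ 2 := by
      refine Filter.eventually_of_mem (isOpen_Ioo.mem_nhds (⟨hr0, hrR⟩ : r ∈ Ioo 0 R))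
        (fun y hy => ?_)
      rw [hf y hy]
      simp only [hFdef]
      ring
    rw [hev.deriv_eq]
    exact hdiv.deriv
  have hfr : f r = (1 / r ^ 2) * F r := hf r ⟨hr0, hrR⟩
  rw [hderiv, hfr]
  rw [le_div_iff₀ (by positivity : (0:ℝ) < (r ^ 2) ^ 2)]
  have key := mul_le_mul_of_nonneg_left hAineq hr0.le
  have hid : -(c * r / 2) * (1 / r ^ 2 * F r) * (r ^ 2) ^ 2 = r * (-(c * F r * r ^ 2 / 2)) := by
    field_simp
  rw [hid]
  calc r * (-(c * F r * r ^ 2 / 2)) ≤ r * (r ^ 2 * S r - 2 * F r) := key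
    _ = r * S r * r ^ 2 - F r * (2 * r) := by ring
end

section
/- Define s : ℝ^k∖{0} → ℝ^k∖{0} by s(x)ᵢ = e^{2σᵢ t(x)} xᵢ, where t(x) is the unique real with ∑ᵢ σᵢ e^{2σᵢ t(x)} xᵢ² = 1. Then s is an involution: s(s(x)) = x for all x ≠ 0, and t(s(x)) = -t(x). -/
/-- With `t(x)` the unique real such that `∑ᵢ σᵢ e^{2σᵢ t(x)} xᵢ² = 1` and
`s(x)ᵢ = e^{2σᵢ t(x)} xᵢ`, the map `s` is an involution on `ℝ^k ∖ {0}` and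
`t(s(x)) = -t(x)`. -/
theorem stmt5 (k : ℕ) (σ : Fin k → ℝ) (hσ : ∀ i, 0 < σ i)
    (t : (Fin k → ℝ) → ℝ)
    (ht : ∀ x : Fin k → ℝ, x ≠ 0 →
      ∑ i, σ i * Real.exp (2 * σ i * t x) * (x i) ^ 2 = 1)
    (htuniq : ∀ x : Fin k → ℝ, x ≠ 0 → ∀ t' : ℝ,
      (∑ i, σ i * Real.exp (2 * σ i * t') * (x i) ^ 2 = 1) → t' = t x)
    (s : (Fin k → ℝ) → (Fin k → ℝ))
    (hs : ∀ x i, s x i = Real.exp (2 * σ i * t x) * x i)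
    (x : Fin k → ℝ) (hx : x ≠ 0) :
    s (s x) = x ∧ t (s x) = -t x := by
  have hsx : s x ≠ 0 := by
    intro h
    apply hx
    funext i
    have := congrFun h i
    rw [hs] at this
    simpa [Real.exp_ne_zero] using this
  have key : t (s x) = -t x := by
    refine (htuniq (s x) hsx (-t x) ?_).symm
    have := ht x hx
    rw [← this]
    apply Finset.sum_congr rfl
    intro i _
    rw [hs]
    rw [mul_pow, ← Real.exp_nat_mul]
    rw [show ((2:ℕ):ℝ) * (2 * σ i * t x) = 2 * σ i * (2 * t x) by ring]
    have h2 : Real.exp (2 * σ i * -t x) * Real.exp (2 * σ i * (2 * t x))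
        = Real.exp (2 * σ i * t x) := by
      rw [← Real.exp_add]; ring_nf
    rw [← h2]; ring
  refine ⟨?_, key⟩
  funext i
  rw [hs, key, hs, ← mul_assoc, ← Real.exp_add]
  simp [mul_comm]
end
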